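/- Let V be a finite-dimensional F_q-subspace of a field extension E of F_q, where E has characteristic p and q is a power of p. Then the polynomial ∏_{v ∈ V} (x − v) is a q-linearized polynomial, i.e., it has the form Σ_i c_i x^{q^i} with coefficients in E. -/

import Mathlib

open Polynomial

section Aux

variable {q : ℕ} {E : Type} [Field E]

/-- `f` is a `q`-linearized polynomial. -/
def IsLinearized (q : ℕ) {E : Type} [Field E] (f : E[X]) : Prop :=
  ∃ (m : ℕ) (c : ℕ → E), f = ∑ i ∈ Finset.range (m + 1), C (c i) * X ^ q ^ i

lemma rep_ext {f : E[X]} {m m' : ℕ} (c : ℕ → E)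
    (h : f = ∑ i ∈ Finset.range (m + 1), C (c i) * X ^ q ^ i) (hm : m ≤ m') :
    f = ∑ i ∈ Finset.range (m' + 1), C (if i < m + 1 then c i else 0) * X ^ q ^ i := by
  symm
  rw [← Finset.sum_subset (Finset.range_subset_range.2 (by omega : m + 1 ≤ m' + 1))
      (fun i _ hi => by rw [if_neg (by simpa using hi), map_zero, zero_mul])]
  rw [h]
  exact Finset.sum_congr rfl fun i hi => by rw [if_pos (Finset.mem_range.1 hi)]

lemma isLinearized_X : IsLinearized q (X : E[X]) :=
  ⟨0, fun _ => 1, by simp⟩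

lemma IsLinearized.sub {f g : E[X]} (hf : IsLinearized q f) (hg : IsLinearized q g) :
    IsLinearized q (f - g) := by
  obtain ⟨m1, c1, h1⟩ := hf
  obtain ⟨m2, c2, h2⟩ := hg
  refine ⟨max m1 m2,
    fun i => (if i < m1 + 1 then c1 i else 0) - (if i < m2 + 1 then c2 i else 0), ?_⟩
  rw [rep_ext c1 h1 (le_max_left m1 m2), rep_ext c2 h2 (le_max_right m1 m2),
    ← Finset.sum_sub_distrib]
  exact Finset.sum_congr rfl fun i _ => by rw [map_sub, sub_mul]

lemma IsLinearized.C_mul {f : E[X]} (β : E) (hf : IsLinearized q f) :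
    IsLinearized q (C β * f) := by
  obtain ⟨m, c, h⟩ := hf
  refine ⟨m, fun i => β * c i, ?_⟩
  rw [h, Finset.mul_sum]
  exact Finset.sum_congr rfl fun i _ => by rw [map_mul, mul_assoc]

variable {p a : ℕ} [Fact p.Prime] [CharP E p]

lemma IsLinearized.pow_q (ha : 0 < a) (hq : q = p ^ a) {f : E[X]}
    (hf : IsLinearized q f) : IsLinearized q (f ^ q) := by
  obtain ⟨m, c, h⟩ := hf
  refine ⟨m + 1, fun i => if i = 0 then 0 else c (i - 1) ^ q, ?_⟩
  haveI : ExpChar E[X] p := .prime Fact.out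
  have h1 : f ^ q = ∑ i ∈ Finset.range (m + 1), (C (c i) * X ^ q ^ i) ^ q := by
    rw [h, hq]
    exact sum_pow_char_pow (p := p) (n := a) _ _
  rw [h1, Finset.sum_range_succ' (fun i => C (if i = 0 then (0:E) else c (i - 1) ^ q) * X ^ q ^ i)]
  simp only [Nat.succ_ne_zero, if_neg, ite_false, Nat.add_sub_cancel, ite_true, if_pos,
    map_zero, zero_mul, add_zero, reduceIte]
  refine Finset.sum_congr rfl fun i _ => ?_
  rw [mul_pow, ← map_pow, ← pow_mul, ← pow_succ]

end Aux

section Aux2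

variable {p a q : ℕ} [Fact p.Prime] {Fq E : Type} [Field Fq] [Fintype Fq]
  [Field E] [CharP E p] [Algebra Fq E]

lemma comp_sub_eq (ha : 0 < a) (hq : q = p ^ a) {f : E[X]} {m : ℕ} (c : ℕ → E)
    (h : f = ∑ i ∈ Finset.range (m + 1), C (c i) * X ^ q ^ i) (t : E) :
    f.comp (X - C t) = f - C (f.eval t) := by
  have key : ∀ i : ℕ, ((X : E[X]) - C t) ^ q ^ i = X ^ q ^ i - C (t ^ q ^ i) := by
    intro i
    have hqi : q ^ i = p ^ (a * i) := by rw [hq, pow_mul]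
    rw [hqi, map_pow, sub_pow_char_pow]
  conv_lhs => rw [h]
  conv_rhs => rw [h]
  rw [sum_comp, eval_finset_sum, map_sum, ← Finset.sum_sub_distrib]
  refine Finset.sum_congr rfl fun i _ => ?_
  rw [mul_comp, C_comp, pow_comp, X_comp, key i, mul_sub, eval_mul, eval_pow, eval_X, eval_C,
    map_mul, map_pow]

lemma eval_smul_eq (hFq : Fintype.card Fq = q) {f : E[X]} {m : ℕ} (c : ℕ → E)
    (h : f = ∑ i ∈ Finset.range (m + 1), C (c i) * X ^ q ^ i) (cc : Fq) (u : E) :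
    f.eval (cc • u) = cc • f.eval u := by
  rw [h, eval_finset_sum, eval_finset_sum, Finset.smul_sum]
  refine Finset.sum_congr rfl fun i _ => ?_
  rw [eval_mul, eval_pow, eval_X, eval_C, eval_mul, eval_pow, eval_X, eval_C,
    Algebra.smul_def, Algebra.smul_def, mul_pow, ← map_pow]
  have hc : cc ^ q ^ i = cc := by rw [← hFq]; exact FiniteField.pow_card_pow i cc
  rw [hc]; ring

lemma master_Fq (hFq : Fintype.card Fq = q) :
    ∏ c : Fq, ((X : Fq[X]) - C c) = X ^ q - X := by
  have hq2 : 1 < q := hFq ▸ Fintype.one_lt_card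
  have h1 : ((X : Fq[X]) ^ q - X).roots = Finset.univ.val := by
    rw [← hFq]; exact FiniteField.roots_X_pow_card_sub_X Fq
  have hm : ((X : Fq[X]) ^ q - X).Monic := by
    apply monic_X_pow_sub
    rw [degree_X]
    exact_mod_cast hq2
  have h2 : ((X : Fq[X]) ^ q - X).natDegree = q := by
    rw [← hFq]; exact FiniteField.X_pow_card_sub_X_natDegree_eq Fq (hFq ▸ hq2)
  have h3 := prod_multiset_X_sub_C_of_monic_of_roots_card_eq hm (by rw [h1, h2]; simp [hFq])
  rw [h1] at h3
  rw [← h3]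
  rfl

lemma master_E (hFq : Fintype.card Fq = q) :
    ∏ c : Fq, ((X : E[X]) - C (algebraMap Fq E c)) = X ^ q - X := by
  have h := congrArg (Polynomial.map (algebraMap Fq E)) (master_Fq hFq)
  rw [Polynomial.map_prod] at h
  simpa using h

lemma master_scaled (hq0 : 0 < q) (hFq : Fintype.card Fq = q) (α : E) (hα : α ≠ 0) :
    ∏ c : Fq, ((X : E[X]) - C (algebraMap Fq E c * α)) = X ^ q - C (α ^ (q - 1)) * X := by
  have h := congrArg (aeval ((C α⁻¹ : E[X]) * X)) (master_E (E := E) hFq)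
  simp only [map_prod, map_sub, map_pow, aeval_X, Polynomial.aeval_C,
    Polynomial.algebraMap_eq] at h
  have h2 := congrArg (fun z => (C α : E[X]) ^ q * z) h
  have hcard : (Finset.univ : Finset Fq).card = q := by simpa using hFq
  calc ∏ c : Fq, ((X : E[X]) - C (algebraMap Fq E c * α))
      = ∏ c : Fq, (C α * (C α⁻¹ * X - C (algebraMap Fq E c))) := by
        refine Finset.prod_congr rfl fun c _ => ?_
        rw [mul_sub, ← mul_assoc, ← map_mul, mul_inv_cancel₀ hα, map_one, one_mul, ← map_mul,
          mul_comm α]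
    _ = (C α : E[X]) ^ q * ∏ c : Fq, (C α⁻¹ * X - C (algebraMap Fq E c)) := by
        rw [Finset.prod_mul_distrib, Finset.prod_const, hcard]
    _ = (C α : E[X]) ^ q * ((C α⁻¹ * X) ^ q - C α⁻¹ * X) := by rw [h]
    _ = X ^ q - C (α ^ (q - 1)) * X := by
        rw [mul_sub, mul_pow, ← mul_assoc, ← mul_pow, ← map_mul, mul_inv_cancel₀ hα, map_one,
          one_pow, one_mul, ← mul_assoc, ← map_pow, ← map_mul]
        have hstep : α ^ (q - 1) * α = α ^ q := by
          rw [← pow_succ, Nat.sub_add_cancel hq0]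
        congr 2
        rw [← hstep, mul_assoc, mul_inv_cancel₀ hα, mul_one]

lemma prod_linear_shift (hq0 : 0 < q) (hFq : Fintype.card Fq = q) (f : E[X]) (α : E)
    (hα : α ≠ 0) :
    ∏ c : Fq, (f - C (algebraMap Fq E c * α)) = f ^ q - C (α ^ (q - 1)) * f := by
  have h := congrArg (aeval f) (master_scaled hq0 hFq α hα)
  simpa only [map_prod, map_sub, map_pow, map_mul, aeval_X, Polynomial.aeval_C,
    Polynomial.algebraMap_eq] using h

end Aux2

section Main

variable {p a q : ℕ} [Fact p.Prime] {Fq E : Type} [Field Fq] [Fintype Fq]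
  [Field E] [CharP E p] [Algebra Fq E]

lemma key_lemma (ha : 0 < a) (hq : q = p ^ a) (hFq : Fintype.card Fq = q) (s : Finset E) :
    ∀ (hs : ((Submodule.span Fq (↑s : Set E) : Submodule Fq E) : Set E).Finite),
    IsLinearized q (∏ v ∈ hs.toFinset, (X - C v)) := by
  classical
  induction s using Finset.induction_on with
  | empty =>
    intro hs
    have h0 : hs.toFinset = {0} := by
      ext x
      simp [Submodule.mem_bot]
    rw [h0, Finset.prod_singleton, map_zero, sub_zero]
    exact isLinearized_X
  | @insert u t hu ih =>
    intro hs
    have hts : ((Submodule.span Fq (↑t : Set E) : Submodule Fq E) : Set E).Finite :=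
      hs.subset (Submodule.span_mono (by simp))
    by_cases hmem : u ∈ Submodule.span Fq (↑t : Set E)
    · have hsp : Submodule.span Fq (insert u (↑t : Set E)) = Submodule.span Fq (↑t : Set E) :=
        Submodule.span_insert_eq_span hmem
      have he : hs.toFinset = hts.toFinset := by
        ext x; simp [Finset.coe_insert, hsp]
      rw [he]; exact ih hts
    · obtain ⟨m, c, hrep⟩ := ih hts
      set f : E[X] := ∏ w ∈ hts.toFinset, (X - C w) with hf
      set α : E := f.eval u with hαdef
      have hα0 : α ≠ 0 := by
        rw [hαdef, hf, eval_prod]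
        refine Finset.prod_ne_zero_iff.2 fun w hw => ?_
        simp only [eval_sub, eval_X, eval_C, sub_ne_zero]
        rintro rfl
        exact hmem (by simpa using hw)
      have hq0 : 0 < q := by
        rw [hq]; exact pow_pos (Fact.out (p := p.Prime)).pos a
      have hdecomp : hs.toFinset
          = (Finset.univ ×ˢ hts.toFinset).image (fun cw : Fq × E => cw.1 • u + cw.2) := by
        ext x
        simp only [Set.Finite.mem_toFinset, SetLike.mem_coe, Finset.mem_image,
          Finset.mem_product, Finset.mem_univ, true_and, Prod.exists]
        constructor
        · intro hx
          rw [Finset.coe_insert, Submodule.span_insert] at hx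
          obtain ⟨y, hy, z, hz, rfl⟩ := Submodule.mem_sup.1 hx
          obtain ⟨cc, rfl⟩ := Submodule.mem_span_singleton.1 hy
          exact ⟨cc, z, by simpa using hz, rfl⟩
        · rintro ⟨cc, w, hw, rfl⟩
          have hu' : u ∈ Submodule.span Fq (↑(insert u t) : Set E) :=
            Submodule.subset_span (by simp)
          have hw' : w ∈ Submodule.span Fq (↑(insert u t) : Set E) :=
            Submodule.span_mono (show (↑t : Set E) ⊆ ↑(insert u t) by
              rw [Finset.coe_insert]; exact Set.subset_insert u ↑t) hw
          exact Submodule.add_mem _ (Submodule.smul_mem _ _ hu') hw'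
      have hinj : ∀ x ∈ Finset.univ ×ˢ hts.toFinset, ∀ y ∈ Finset.univ ×ˢ hts.toFinset,
          (fun cw : Fq × E => cw.1 • u + cw.2) x = (fun cw : Fq × E => cw.1 • u + cw.2) y
          → x = y := by
        rintro ⟨c1, w1⟩ h1 ⟨c2, w2⟩ h2 heq
        simp only [Finset.mem_product, Finset.mem_univ, true_and,
          Set.Finite.mem_toFinset, SetLike.mem_coe] at h1 h2
        simp only at heq
        by_cases hcc : c1 = c2
        · subst hcc
          have hww : w1 = w2 := add_left_cancel heq
          rw [hww]
        · exfalso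
          have hsub : (c1 - c2) • u = w2 - w1 := by
            rw [sub_smul, sub_eq_sub_iff_add_eq_add, heq]
            exact add_comm _ _
          have : u = (c1 - c2)⁻¹ • (w2 - w1) := by
            rw [← hsub, smul_smul, inv_mul_cancel₀ (sub_ne_zero.2 hcc), one_smul]
          apply hmem
          rw [this]
          exact Submodule.smul_mem _ _ (Submodule.sub_mem _ h2 h1)
      rw [hdecomp, Finset.prod_image hinj, Finset.prod_product]
      have inner : ∀ cc : Fq,
          ∏ w ∈ hts.toFinset, ((X : E[X]) - C (cc • u + w))
            = f - C (algebraMap Fq E cc * α) := by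
        intro cc
        have hterm : ∀ w : E, ((X : E[X]) - C (cc • u + w))
            = ((X : E[X]) - C w).comp (X - C (cc • u)) := by
          intro w
          rw [sub_comp, X_comp, C_comp, map_add]
          ring
        rw [Finset.prod_congr rfl (fun w _ => hterm w), ← prod_comp, ← hf,
          comp_sub_eq ha hq c hrep, eval_smul_eq hFq c hrep, ← hαdef, Algebra.smul_def]
      rw [Finset.prod_congr rfl (fun cc _ => inner cc), prod_linear_shift hq0 hFq f α hα0]
      exact (IsLinearized.pow_q ha hq ⟨m, c, hrep⟩).sub
        (IsLinearized.C_mul _ ⟨m, c, hrep⟩)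

end Main

theorem stmt_2 (p a q : ℕ) [Fact p.Prime] (ha : 0 < a) (hq : q = p ^ a)
    (Fq E : Type) [Field Fq] [Fintype Fq] (hFq : Fintype.card Fq = q)
    [Field E] [CharP E p] [Algebra Fq E]
    (V : Submodule Fq E) [FiniteDimensional Fq V] (hfin : (V : Set E).Finite) :
    ∃ (m : ℕ) (c : ℕ → E),
      ∏ v ∈ hfin.toFinset, (X - C v) =
        ∑ i ∈ Finset.range (m + 1), C (c i) * X ^ q ^ i := by
  classical
  have hspan : Submodule.span Fq (↑hfin.toFinset : Set E) = V := by
    rw [Set.Finite.coe_toFinset, Submodule.span_eq]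
  have hs : ((Submodule.span Fq (↑hfin.toFinset : Set E) : Submodule Fq E) : Set E).Finite := by
    rw [hspan]; exact hfin
  obtain ⟨m, c, h⟩ := key_lemma ha hq hFq hfin.toFinset hs
  refine ⟨m, c, ?_⟩
  rw [← h]
  refine Finset.prod_congr ?_ fun _ _ => rfl
  ext x
  simp [hspan]
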